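/- Let U ⊇ V be two packing sets in ℝ^n and let α ≥ 1. Then U is an α-approximation of V (i.e., sup{cᵀx : x ∈ U} ≤ α·sup{cᵀx : x ∈ V} for every c ∈ ℝ^n with c ≥ 0) if and only if U ⊆ αV, where αV = {αv : v ∈ V}. -/

import Mathlib

open Finset Pointwise

/-- Dot product of two vectors in `ℝ^n`. -/
def dotp {n : ℕ} (c x : Fin n → ℝ) : ℝ := ∑ j, c j * x j

/-- A point of `ℝ^n` is integral if all its coordinates are integers. -/
def isIntPt {n : ℕ} (x : Fin n → ℝ) : Prop := ∀ j, ∃ z : ℤ, x j = (z : ℝ)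

/-- The value `sup { cᵀ x : x ∈ S }`, in the extended reals. -/
noncomputable def supVal {n : ℕ} (c : Fin n → ℝ) (S : Set (Fin n → ℝ)) : EReal :=
  ⨆ x ∈ S, ((dotp c x : ℝ) : EReal)

/-- The value `inf { cᵀ x : x ∈ S }`, in the extended reals. -/
noncomputable def infVal {n : ℕ} (c : Fin n → ℝ) (S : Set (Fin n → ℝ)) : EReal :=
  ⨅ x ∈ S, ((dotp c x : ℝ) : EReal)

/-- The polyhedron `{x ≥ 0 : A x ≤ b}`. -/
def packLP {n m : ℕ} (A : Matrix (Fin m) (Fin n) ℝ) (b : Fin m → ℝ) : Set (Fin n → ℝ) :=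
  {x | (∀ j, 0 ≤ x j) ∧ ∀ i, dotp (A i) x ≤ b i}

/-- Aggregation closure of a packing polyhedron. -/
def aggP {n m : ℕ} (A : Matrix (Fin m) (Fin n) ℝ) (b : Fin m → ℝ) : Set (Fin n → ℝ) :=
  ⋂ lam : {l : Fin m → ℝ // ∀ i, 0 ≤ l i},
    convexHull ℝ {x | (∀ j, 0 ≤ x j) ∧ isIntPt x ∧
      dotp (fun j => ∑ i, lam.1 i * A i j) x ≤ ∑ i, lam.1 i * b i}

/-- 1-row aggregation closure of a packing polyhedron. -/
def oneAggP {n m : ℕ} (A : Matrix (Fin m) (Fin n) ℝ) (b : Fin m → ℝ) : Set (Fin n → ℝ) :=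
  ⋂ i : Fin m, convexHull ℝ {x | (∀ j, 0 ≤ x j) ∧ isIntPt x ∧ dotp (A i) x ≤ b i}

/-- Chvátal–Gomory closure of a set `P ⊆ ℝ^n`. -/
def cgClosure {n : ℕ} (P : Set (Fin n → ℝ)) : Set (Fin n → ℝ) :=
  {x | ∀ (c : Fin n → ℤ) (δ : ℝ),
    (∀ y ∈ P, δ ≤ ∑ j, (c j : ℝ) * y j) → ((⌈δ⌉ : ℤ) : ℝ) ≤ ∑ j, (c j : ℝ) * x j}

/-- 1-row CG closure of a packing polyhedron. -/
def oneCGP {n m : ℕ} (A : Matrix (Fin m) (Fin n) ℝ) (b : Fin m → ℝ) : Set (Fin n → ℝ) :=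
  ⋂ i : Fin m, cgClosure {x | (∀ j, 0 ≤ x j) ∧ dotp (A i) x ≤ b i}

/-- Covering polyhedron with bounds `u j` on coordinates `j ∈ J` (coordinates outside `J`
are unbounded above). -/
def coverLP {n m : ℕ} (A : Matrix (Fin m) (Fin n) ℝ) (b : Fin m → ℝ)
    (J : Finset (Fin n)) (u : Fin n → ℝ) : Set (Fin n → ℝ) :=
  {x | (∀ j, 0 ≤ x j) ∧ (∀ j ∈ J, x j ≤ u j) ∧ ∀ i, b i ≤ dotp (A i) x}

/-- Aggregation closure of a covering polyhedron with bounds. -/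
def aggC {n m : ℕ} (A : Matrix (Fin m) (Fin n) ℝ) (b : Fin m → ℝ)
    (J : Finset (Fin n)) (u : Fin n → ℝ) : Set (Fin n → ℝ) :=
  ⋂ lam : {l : Fin m → ℝ // ∀ i, 0 ≤ l i},
    convexHull ℝ {x | (∀ j, 0 ≤ x j) ∧ isIntPt x ∧ (∀ j ∈ J, x j ≤ u j) ∧
      (∑ i, lam.1 i * b i) ≤ dotp (fun j => ∑ i, lam.1 i * A i j) x}

/-- 1-row aggregation closure of a covering polyhedron with bounds. -/
def oneAggC {n m : ℕ} (A : Matrix (Fin m) (Fin n) ℝ) (b : Fin m → ℝ)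
    (J : Finset (Fin n)) (u : Fin n → ℝ) : Set (Fin n → ℝ) :=
  ⋂ i : Fin m, convexHull ℝ
    {x | (∀ j, 0 ≤ x j) ∧ isIntPt x ∧ (∀ j ∈ J, x j ≤ u j) ∧ b i ≤ dotp (A i) x}

/-- 1-row CG closure of a covering polyhedron with bounds. -/
def oneCGC {n m : ℕ} (A : Matrix (Fin m) (Fin n) ℝ) (b : Fin m → ℝ)
    (J : Finset (Fin n)) (u : Fin n → ℝ) : Set (Fin n → ℝ) :=
  ⋂ i : Fin m, cgClosure {x | (∀ j, 0 ≤ x j) ∧ (∀ j ∈ J, x j ≤ u j) ∧ b i ≤ dotp (A i) x}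

/-- A packing set in `ℝ^n`: a set of the form `{x ≥ 0 : aᵢᵀ x ≤ bᵢ ∀ i ∈ I}` with all the
data nonnegative, where `I` is an arbitrary index set. -/
def IsPackingSet {n : ℕ} (Q : Set (Fin n → ℝ)) : Prop :=
  ∃ (ι : Type) (a : ι → Fin n → ℝ) (β : ι → ℝ),
    (∀ i j, 0 ≤ a i j) ∧ (∀ i, 0 ≤ β i) ∧
    Q = {x | (∀ j, 0 ≤ x j) ∧ ∀ i, dotp (a i) x ≤ β i}

/-- For packing sets `U ⊇ V` and `α ≥ 1`: `U` is an `α`-approximation of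
`V` (i.e. `sup{cᵀx : x ∈ U} ≤ α · sup{cᵀx : x ∈ V}` for all `c ≥ 0`) iff `U ⊆ α • V`. -/
lemma dotp_smul {n : ℕ} (c x : Fin n → ℝ) (t : ℝ) : dotp c (t • x) = t * dotp c x := by
  simp only [dotp, Pi.smul_apply, smul_eq_mul, Finset.mul_sum]
  exact Finset.sum_congr rfl fun j _ => by ring

theorem stmt8 {n : ℕ} (U V : Set (Fin n → ℝ)) (hU : IsPackingSet U) (hV : IsPackingSet V)
    (hVU : V ⊆ U) (α : ℝ) (hα : 1 ≤ α) :
    (∀ c : Fin n → ℝ, (∀ j, 0 ≤ c j) → supVal c U ≤ ((α : ℝ) : EReal) * supVal c V)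
      ↔ U ⊆ α • V := by
  have hα0 : (0:ℝ) < α := lt_of_lt_of_le one_pos hα
  constructor
  · intro h x hxU
    obtain ⟨ι, a, β, ha, hβ, hVeq⟩ := hV
    obtain ⟨ι', a', β', _, _, hUeq⟩ := hU
    have hx0 : ∀ j, 0 ≤ x j := by rw [hUeq] at hxU; exact hxU.1
    -- 0 ∈ V
    have h0V : (0 : Fin n → ℝ) ∈ V := by
      rw [hVeq]
      refine ⟨fun j => le_refl 0, fun i => ?_⟩
      simp [dotp, hβ i]
    have key : ∀ i, dotp (a i) x ≤ α * β i := by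
      intro i
      have hc := h (a i) (ha i)
      have hle : supVal (a i) V ≤ ((β i : ℝ) : EReal) := by
        refine iSup₂_le fun y hy => ?_
        rw [hVeq] at hy
        exact_mod_cast hy.2 i
      have hge : (0 : EReal) ≤ supVal (a i) V := by
        have := le_iSup₂ (f := fun y (_ : y ∈ V) => ((dotp (a i) y : ℝ) : EReal)) 0 h0V
        simpa [supVal, dotp] using this
      have hne_top : supVal (a i) V ≠ ⊤ := ne_top_of_le_ne_top (by simp) hle
      have hne_bot : supVal (a i) V ≠ ⊥ := ne_bot_of_le_ne_bot (by simp) hge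
      set r := (supVal (a i) V).toReal with hr
      have hreq : supVal (a i) V = ((r : ℝ) : EReal) := (EReal.coe_toReal hne_top hne_bot).symm
      have hrβ : r ≤ β i := by rw [hreq] at hle; exact_mod_cast hle
      have hxle : ((dotp (a i) x : ℝ) : EReal) ≤ supVal (a i) U :=
        le_iSup₂ (f := fun y (_ : y ∈ U) => ((dotp (a i) y : ℝ) : EReal)) x hxU
      have : ((dotp (a i) x : ℝ) : EReal) ≤ ((α * r : ℝ) : EReal) := by
        calc ((dotp (a i) x : ℝ) : EReal) ≤ supVal (a i) U := hxle
        _ ≤ ((α : ℝ) : EReal) * supVal (a i) V := hc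
        _ = ((α * r : ℝ) : EReal) := by rw [hreq]; exact_mod_cast (EReal.coe_mul α r).symm
      have h1 : dotp (a i) x ≤ α * r := by exact_mod_cast this
      exact h1.trans (mul_le_mul_of_nonneg_left hrβ (le_of_lt hα0))
    refine Set.mem_smul_set.mpr ⟨α⁻¹ • x, ?_, ?_⟩
    · rw [hVeq]
      refine ⟨fun j => mul_nonneg (inv_nonneg.mpr hα0.le) (hx0 j), fun i => ?_⟩
      rw [dotp_smul]
      rw [inv_mul_le_iff₀ hα0]
      exact key i
    · rw [smul_smul, mul_inv_cancel₀ (ne_of_gt hα0), one_smul]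
  · intro h c hc
    refine iSup₂_le fun x hxU => ?_
    obtain ⟨v, hvV, hvx⟩ := Set.mem_smul_set.mp (h hxU)
    have hvle : ((dotp c v : ℝ) : EReal) ≤ supVal c V :=
      le_iSup₂ (f := fun y (_ : y ∈ V) => ((dotp c y : ℝ) : EReal)) v hvV
    have : ((dotp c x : ℝ) : EReal) = ((α:ℝ):EReal) * ((dotp c v : ℝ) : EReal) := by
      rw [← hvx, dotp_smul]; exact_mod_cast EReal.coe_mul α (dotp c v)
    rw [this]
    exact mul_le_mul_of_nonneg_left hvle (by exact_mod_cast hα0.le)
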